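/- Let R > 1 and f : [0,R] → ℝ be a nonnegative concave function, and let f̃ : [0,R] → ℝ be the linear function with f̃(1) = f(1) and f̃(R) = 0. Then for any increasing function g : [0,∞) → [0,∞), one has (∫₁^R g(f(t)) dt) / (∫₀^R g(f(t)) dt) ≥ (∫₁^R g(f̃(t)) dt) / (∫₀^R g(f̃(t)) dt), provided the denominators are positive. -/

import Mathlib

open MeasureTheory intervalIntegral

theorem tail_bound_convexity (R : ℝ) (hR : 1 < R) (f : ℝ → ℝ)
    (hconc : ConcaveOn ℝ (Set.Icc 0 R) f) (hf0 : ∀ t ∈ Set.Icc (0:ℝ) R, 0 ≤ f t)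
    (ftilde : ℝ → ℝ) (hft : ∀ t, ftilde t = f 1 * (R - t) / (R - 1))
    (g : ℝ → ℝ) (hg : MonotoneOn g (Set.Ici 0)) (hg0 : ∀ x ≥ (0:ℝ), 0 ≤ g x)
    (hden : 0 < ∫ t in (0:ℝ)..R, g (f t))
    (hdent : 0 < ∫ t in (0:ℝ)..R, g (ftilde t)) :
    (∫ t in (1:ℝ)..R, g (ftilde t)) / (∫ t in (0:ℝ)..R, g (ftilde t)) ≤
      (∫ t in (1:ℝ)..R, g (f t)) / (∫ t in (0:ℝ)..R, g (f t)) := by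
  have hR1 : (0:ℝ) < R - 1 := by linarith
  have h0R : (0:ℝ) ≤ R := by linarith
  have h1R : (1:ℝ) ≤ R := le_of_lt hR
  -- f 1 nonneg
  have hf1 : (1:ℝ) ∈ Set.Icc (0:ℝ) R := by constructor <;> linarith
  have hf1nn : 0 ≤ f 1 := hf0 1 hf1
  -- nonnegativity of ftilde on [0,R]
  have hftnn : ∀ t ∈ Set.Icc (0:ℝ) R, 0 ≤ ftilde t := by
    intro t ht
    rw [hft t]
    have : 0 ≤ R - t := by linarith [ht.2]
    positivity
  -- pointwise comparison on [1,R] : ftilde ≤ f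
  have hcomp1 : ∀ t ∈ Set.Icc (1:ℝ) R, ftilde t ≤ f t := by
    intro t ht
    have hRnn : 0 ≤ f R := hf0 R ⟨h0R, le_refl R⟩
    have ha : 0 ≤ (R - t) / (R - 1) := by
      apply div_nonneg <;> linarith [ht.2]
    have hb : 0 ≤ (t - 1) / (R - 1) := by
      apply div_nonneg <;> linarith [ht.1]
    have hab : (R - t) / (R - 1) + (t - 1) / (R - 1) = 1 := by
      field_simp
      ring
    have := hconc.2 hf1 ⟨h0R, le_refl R⟩ ha hb hab
    simp only [smul_eq_mul] at this
    have hpt : (R - t) / (R - 1) * (1:ℝ) + (t - 1) / (R - 1) * R = t := by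
      field_simp
      ring
    rw [hpt] at this
    rw [hft t, mul_div_assoc, mul_comm]
    linarith [mul_nonneg hb hRnn]
  -- pointwise comparison on [0,1] : f ≤ ftilde
  have hcomp0 : ∀ t ∈ Set.Icc (0:ℝ) 1, f t ≤ ftilde t := by
    intro t ht
    have htR : t ∈ Set.Icc (0:ℝ) R := ⟨ht.1, by linarith [ht.2]⟩
    have hRnn : 0 ≤ f R := hf0 R ⟨h0R, le_refl R⟩
    have hRt : 0 < R - t := by linarith [ht.2]
    have ha : 0 ≤ (R - 1) / (R - t) := by positivity
    have hb : 0 ≤ (1 - t) / (R - t) := by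
      apply div_nonneg <;> linarith [ht.2]
    have hab : (R - 1) / (R - t) + (1 - t) / (R - t) = 1 := by
      field_simp
      ring
    have := hconc.2 htR ⟨h0R, le_refl R⟩ ha hb hab
    simp only [smul_eq_mul] at this
    have hpt : (R - 1) / (R - t) * t + (1 - t) / (R - t) * R = 1 := by
      field_simp
      ring
    rw [hpt] at this
    have key : (R - 1) * f t + (1 - t) * f R ≤ f 1 * (R - t) := by
      have h2 := mul_le_mul_of_nonneg_right this hRt.le
      calc (R - 1) * f t + (1 - t) * f R
          = ((R - 1) / (R - t) * f t + (1 - t) / (R - t) * f R) * (R - t) := by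
            field_simp
        _ ≤ f 1 * (R - t) := h2
    rw [hft t, le_div_iff₀ hR1]
    have hbR : 0 ≤ (1 - t) * f R := mul_nonneg (by linarith [ht.2]) hRnn
    linarith
  -- integrability
  have hint_f : IntervalIntegrable (fun t => g (f t)) volume 0 R := by
    by_contra h
    rw [intervalIntegral.integral_undef h] at hden
    exact lt_irrefl _ hden
  have hint_ft : IntervalIntegrable (fun t => g (ftilde t)) volume 0 R := by
    by_contra h
    rw [intervalIntegral.integral_undef h] at hdent
    exact lt_irrefl _ hdent
  have hsub1 : Set.uIcc (0:ℝ) 1 ⊆ Set.uIcc (0:ℝ) R := Set.uIcc_subset_uIcc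
    (Set.left_mem_uIcc) (by rw [Set.uIcc_of_le h0R]; exact ⟨by norm_num, h1R⟩)
  have hsub2 : Set.uIcc (1:ℝ) R ⊆ Set.uIcc (0:ℝ) R := Set.uIcc_subset_uIcc
    (by rw [Set.uIcc_of_le h0R]; exact ⟨by norm_num, h1R⟩) (Set.right_mem_uIcc)
  have hf01 := hint_f.mono_set hsub1
  have hf1R := hint_f.mono_set hsub2
  have hft01 := hint_ft.mono_set hsub1
  have hft1R := hint_ft.mono_set hsub2
  -- splits
  have hsplit_f : (∫ t in (0:ℝ)..R, g (f t)) =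
      (∫ t in (0:ℝ)..1, g (f t)) + ∫ t in (1:ℝ)..R, g (f t) :=
    (intervalIntegral.integral_add_adjacent_intervals hf01 hf1R).symm
  have hsplit_ft : (∫ t in (0:ℝ)..R, g (ftilde t)) =
      (∫ t in (0:ℝ)..1, g (ftilde t)) + ∫ t in (1:ℝ)..R, g (ftilde t) :=
    (intervalIntegral.integral_add_adjacent_intervals hft01 hft1R).symm
  -- pointwise g-comparisons and integral inequalities
  have hB : (∫ t in (1:ℝ)..R, g (ftilde t)) ≤ ∫ t in (1:ℝ)..R, g (f t) := by
    apply intervalIntegral.integral_mono_on h1R hft1R hf1R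
    intro t ht
    have htR : t ∈ Set.Icc (0:ℝ) R := ⟨by linarith [ht.1], ht.2⟩
    exact hg (hftnn t htR) (hf0 t htR) (hcomp1 t ht)
  have hA : (∫ t in (0:ℝ)..1, g (f t)) ≤ ∫ t in (0:ℝ)..1, g (ftilde t) := by
    apply intervalIntegral.integral_mono_on (by norm_num) hf01 hft01
    intro t ht
    have htR : t ∈ Set.Icc (0:ℝ) R := ⟨ht.1, by linarith [ht.2]⟩
    exact hg (hf0 t htR) (hftnn t htR) (hcomp0 t ht)
  -- nonnegativity of pieces
  have hAnn : 0 ≤ ∫ t in (0:ℝ)..1, g (f t) := by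
    apply intervalIntegral.integral_nonneg (by norm_num)
    intro t ht
    exact hg0 _ (hf0 t ⟨ht.1, by linarith [ht.2]⟩)
  have hBtnn : 0 ≤ ∫ t in (1:ℝ)..R, g (ftilde t) := by
    apply intervalIntegral.integral_nonneg h1R
    intro t ht
    exact hg0 _ (hftnn t ⟨by linarith [ht.1], ht.2⟩)
  rw [div_le_div_iff₀ hdent hden, hsplit_f, hsplit_ft]
  nlinarith [mul_le_mul hA hB hBtnn (le_trans hAnn hA)]
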